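/- arXiv:1502.05014 — 6 statements merged into one kernel-verified Lean document; each statement's English description precedes it below -/
import Mathlib

section
/- If J is a strongly stable monomial ideal in K[x_1,...,x_n], m is a monomial divisible by neither a nor b (where a, b are variables with a lexicographically greater than b), and the monomial m·a^α·b^β lies in J with β > α + t for some nonnegative integer t, then the monomial m·a^(β−t)·b^(α+t) also lies in J. -/
open Finsupp

/-- A monomial in `n` variables, recorded by its exponent vector.
Variable `x_1` corresponds to index `0`, and `x_1 > x_2 > ... > x_n`
in the lexicographic variable order, so `a >_lex b` means `a < b` as indices. -/
abbrev Mon (n : ℕ) := Fin n →₀ ℕ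

/-- The set of monomials of a monomial ideal: closed under multiplication by monomials. -/
def IsMonSet {n : ℕ} (S : Set (Mon n)) : Prop :=
  ∀ m ∈ S, ∀ f : Mon n, m + f ∈ S

/-- Strongly stable: if `x_i · m ∈ S` and `j < i` then `x_j · m ∈ S`. -/
def StronglyStable {n : ℕ} (S : Set (Mon n)) : Prop :=
  ∀ m : Mon n, ∀ i j : Fin n, j < i →
    m + Finsupp.single i 1 ∈ S → m + Finsupp.single j 1 ∈ S

/-- Total degree of a monomial. -/
def mdeg {n : ℕ} (m : Mon n) : ℕ := m.sum fun _ e => e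

/-- `u >_lex v` : at the first variable where they differ, `u` has the larger exponent. -/
def LexGT {n : ℕ} (u v : Mon n) : Prop :=
  ∃ i : Fin n, v i < u i ∧ ∀ j : Fin n, j < i → u j = v j

/-- If `J` is strongly stable, `m` is divisible by neither `a` nor `b` (with `a >_lex b`,
i.e. `a < b` as indices), `m·a^α·b^β ∈ J` and `β > α + t`, then
`m·a^(β-t)·b^(α+t) ∈ J`. -/
theorem stmt0 {n : ℕ} (J : Set (Mon n)) (hmon : IsMonSet J) (hss : StronglyStable J)
    (a b : Fin n) (hab : a < b) (m : Mon n) (hma : m a = 0) (hmb : m b = 0)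
    (α β t : ℕ) (hβ : α + t < β)
    (hmem : m + Finsupp.single a α + Finsupp.single b β ∈ J) :
    m + Finsupp.single a (β - t) + Finsupp.single b (α + t) ∈ J := by
  have key : ∀ s, s ≤ β → m + Finsupp.single a (α + s) + Finsupp.single b (β - s) ∈ J := by
    intro s
    induction s with
    | zero => simpa using hmem
    | succ s ih =>
      intro hs
      have ihs := ih (Nat.le_of_succ_le hs)
      have hsum : β - (s + 1) + 1 = β - s := by omega
      have h1 : (m + Finsupp.single a (α + s) + Finsupp.single b (β - (s + 1)))
          + Finsupp.single b 1 ∈ J := by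
        have : (m + Finsupp.single a (α + s) + Finsupp.single b (β - (s + 1)))
            + Finsupp.single b 1
            = m + Finsupp.single a (α + s) + Finsupp.single b (β - s) := by
          rw [add_assoc, ← Finsupp.single_add, hsum]
        rw [this]; exact ihs
      have h2 := hss _ b a hab h1
      have : (m + Finsupp.single a (α + s) + Finsupp.single b (β - (s + 1)))
          + Finsupp.single a 1
          = m + Finsupp.single a (α + (s + 1)) + Finsupp.single b (β - (s + 1)) := by
        rw [add_right_comm, add_assoc m, ← Finsupp.single_add]
        ring_nf
      rwa [this] at h2
  have h := key (β - t - α) (by omega)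
  have e1 : α + (β - t - α) = β - t := by omega
  have e2 : β - (β - t - α) = α + t := by omega
  rwa [e1, e2] at h
end

section
/- Let J be a strongly stable monomial ideal and fix variables a >_lex b and an integer t ≥ 0. Then J is contained in Shift_{a,b,t}(J'), for any monomial ideal J' containing J. In particular, every monomial of J belongs to the (a,b,t)-shift of any monomial ideal containing J. -/
open Finsupp

/-- Membership in the `(a,b,t)`-shift of a monomial ideal `I`, as a set of monomials. -/
def InShift {n : ℕ} (I : Set (Mon n)) (a b : Fin n) (t : ℕ) (g : Mon n) : Prop :=
  ∃ f : Mon n, f a = 0 ∧ f b = 0 ∧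
    ((∃ s r, r < t ∧ g = f + Finsupp.single a s + Finsupp.single b r ∧ g ∈ I) ∨
     (∃ s, g = f + Finsupp.single a s + Finsupp.single b (s + t) ∧ g ∈ I) ∨
     (∃ s l, s < l ∧ g = f + Finsupp.single a l + Finsupp.single b (s + t) ∧
        (f + Finsupp.single a l + Finsupp.single b (s + t) ∈ I ∨
         f + Finsupp.single a s + Finsupp.single b (l + t) ∈ I)) ∨
     (∃ s l, s < l ∧ g = f + Finsupp.single a s + Finsupp.single b (l + t) ∧
        f + Finsupp.single a l + Finsupp.single b (s + t) ∈ I ∧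
        f + Finsupp.single a s + Finsupp.single b (l + t) ∈ I))

lemma swap_lemma {n : ℕ} (J : Set (Mon n)) (hss : StronglyStable J) (a b : Fin n)
    (hab : a < b) : ∀ d : ℕ, ∀ u : Mon n, u + Finsupp.single b d ∈ J →
      u + Finsupp.single a d ∈ J := by
  intro d
  induction d with
  | zero => simp
  | succ d ih =>
    intro u h
    have h1 : (u + Finsupp.single b d) + Finsupp.single b 1 ∈ J := by
      rw [add_assoc, ← Finsupp.single_add]; exact h
    have h2 := hss (u + Finsupp.single b d) b a hab h1
    have h3 : (u + Finsupp.single a 1) + Finsupp.single b d ∈ J := by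
      rw [add_right_comm] at h2; exact h2
    have h4 := ih _ h3
    rw [add_assoc, ← Finsupp.single_add] at h4
    simpa [add_comm 1 d] using h4

/-- A strongly stable monomial ideal `J` is contained in `Shift_{a,b,t}(I)` for
any monomial ideal `I` containing `J`. -/
theorem stmt1 {n : ℕ} (J I : Set (Mon n)) (hJmon : IsMonSet J) (hss : StronglyStable J)
    (hImon : IsMonSet I) (hJI : J ⊆ I) (a b : Fin n) (hab : a < b) (t : ℕ) :
    ∀ m ∈ J, InShift I a b t m := by
  intro m hm
  have hne : a ≠ b := ne_of_lt hab
  set s := m a with hs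
  set r := m b with hr
  set f : Mon n := (m.erase a).erase b with hf
  have hfa : f a = 0 := by simp [hf, Finsupp.erase_ne hne, Finsupp.erase_same]
  have hfb : f b = 0 := by simp [hf]
  have hmeq : m = f + Finsupp.single a s + Finsupp.single b r := by
    have h1 : f + Finsupp.single b r = m.erase a := by
      have := Finsupp.erase_add_single b (m.erase a)
      rwa [Finsupp.erase_ne hne.symm] at this
    rw [add_right_comm, h1, Finsupp.erase_add_single]
  refine ⟨f, hfa, hfb, ?_⟩
  rcases lt_or_ge r t with hrt | hrt
  · exact Or.inl ⟨s, r, hrt, hmeq, hJI hm⟩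
  · have hl : r = (r - t) + t := (Nat.sub_add_cancel hrt).symm
    rcases lt_trichotomy (r - t) s with h | h | h
    · refine Or.inr (Or.inr (Or.inl ⟨r - t, s, h, ?_, Or.inl ?_⟩))
      · rwa [← hl]
      · rw [← hl, ← hmeq]; exact hJI hm
    · refine Or.inr (Or.inl ⟨s, ?_, hJI hm⟩)
      rw [hmeq, hl, h]
    · refine Or.inr (Or.inr (Or.inr ⟨s, r - t, h, ?_, ?_, ?_⟩))
      · rwa [← hl]
      · have hd : s + t + (r - t - s) = r := by omega
        have hu : (f + Finsupp.single a s + Finsupp.single b (s + t))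
            + Finsupp.single b (r - t - s) ∈ J := by
          rw [add_assoc, ← Finsupp.single_add, hd, ← hmeq]; exact hm
        have hJ := swap_lemma J hss a b hab _ _ hu
        rw [add_right_comm, add_assoc (f + Finsupp.single a s)] at hJ
        have hsd : s + (r - t - s) = r - t := by omega
        have heq : f + Finsupp.single a (r - t) + Finsupp.single b (s + t)
            = f + Finsupp.single a s
              + (Finsupp.single a (r - t - s) + Finsupp.single b (s + t)) := by
          rw [← hsd, Finsupp.single_add]; simp only [add_assoc, Nat.add_sub_cancel_left]
        rw [heq]
        exact hJI hJ
      · rw [← hl, ← hmeq]; exact hJI hm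
end

section
/- Let I be a monomial ideal in A = K[x_1,...,x_n] containing P + J, where P = (x_1^{e_1},...,x_r^{e_r}) with 2 ≤ e_1 ≤ ... ≤ e_r and J strongly stable. Fix variables a >_lex b, let I' be the ideal generated by all minimal generators of I except b^{e_b} (if b^{e_b} is a minimal generator), let T' be the {a,b}-compression of I', and set T = T' + P. Then J ⊆ T. -/
open Finsupp

/-- The number of monomials of degree `d` in the fiber ideal `V_f ⊂ K[a,b]` of `I`. -/
noncomputable def fiberCount {n : ℕ} (I : Set (Mon n)) (a b : Fin n) (f : Mon n) (d : ℕ) : ℕ :=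
  Set.ncard {q : ℕ | ∃ p, p + q = d ∧ f + Finsupp.single a p + Finsupp.single b q ∈ I}

/-- The `{a,b}`-compression of `I`. -/
def Compress {n : ℕ} (I : Set (Mon n)) (a b : Fin n) : Set (Mon n) :=
  {g | ∃ (f : Mon n) (p q : ℕ), f a = 0 ∧ f b = 0 ∧
    g = f + Finsupp.single a p + Finsupp.single b q ∧ q < fiberCount I a b f (p + q)}

/-- The extension of a set of monomials to a monomial ideal:
all monomials divisible by some member. -/
def extIdeal {n : ℕ} (L : Set (Mon n)) : Set (Mon n) :=
  {g | ∃ m ∈ L, ∀ k, m k ≤ g k}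

/-- The minimal (monomial) generators of a monomial ideal. -/
def minGens {n : ℕ} (I : Set (Mon n)) : Set (Mon n) :=
  {m ∈ I | ∀ m' ∈ I, (∀ k, m' k ≤ m k) → m' = m}

/-- The monomial set of `P = (x_1^{e_1}, ..., x_r^{e_r})`. -/
def powersIdeal {n : ℕ} (e : Fin n → ℕ) (r : ℕ) : Set (Mon n) :=
  {m : Mon n | ∃ i : Fin n, (i : ℕ) < r ∧ e i ≤ m i}

lemma mdeg_eq {n : ℕ} (m : Mon n) : mdeg m = ∑ k, m k := by
  rw [mdeg, Finsupp.sum_fintype]; intro; rfl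

lemma exists_minGen {n : ℕ} (I : Set (Mon n)) :
    ∀ m ∈ I, ∃ g ∈ minGens I, ∀ k, g k ≤ m k := by
  have key : ∀ d : ℕ, ∀ m : Mon n, mdeg m = d → m ∈ I →
      ∃ g ∈ minGens I, ∀ k, g k ≤ m k := by
    intro d
    induction d using Nat.strong_induction_on with
    | _ d ih =>
    intro m hd hm
    by_cases hmin : ∀ m' ∈ I, (∀ k, m' k ≤ m k) → m' = m
    · exact ⟨m, ⟨hm, hmin⟩, fun k => le_rfl⟩
    · push_neg at hmin
      obtain ⟨m', hm', hle, hne⟩ := hmin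
      have hlt : mdeg m' < d := by
        subst hd
        rw [mdeg_eq, mdeg_eq]
        have : ∃ k, m' k < m k := by
          by_contra h; push_neg at h
          exact hne (Finsupp.ext fun k => le_antisymm (hle k) (h k))
        obtain ⟨k, hk⟩ := this
        exact Finset.sum_lt_sum (fun i _ => hle i) ⟨k, Finset.mem_univ k, hk⟩
      obtain ⟨g, hg, hgle⟩ := ih _ hlt m' rfl hm'
      exact ⟨g, hg, fun k => (hgle k).trans (hle k)⟩
  exact fun m hm => key (mdeg m) m rfl hm

lemma transfer {n : ℕ} {J : Set (Mon n)} (hss : StronglyStable J) {a b : Fin n} (hab : a < b)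
    (f : Mon n) (p q : ℕ) (h : f + single a p + single b q ∈ J) :
    ∀ t, t ≤ q → f + single a (p + t) + single b (q - t) ∈ J := by
  intro t
  induction t with
  | zero => simpa using h
  | succ t ih =>
    intro ht
    have h1 := ih (Nat.le_of_succ_le ht)
    have h2 : (f + single a (p + t) + single b (q - (t+1))) + single b 1 ∈ J := by
      have e1 : (f + single a (p + t) + single b (q - (t+1))) + single b 1 =
          f + single a (p + t) + single b (q - t) := by
        ext k; simp [Finsupp.single_apply]; split_ifs <;> omega
      rw [e1]; exact h1
    have h3 := hss _ b a hab h2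
    have e2 : f + single a (p + (t+1)) + single b (q - (t+1)) =
        (f + single a (p + t) + single b (q - (t+1))) + single a 1 := by
      ext k; simp [Finsupp.single_apply]; split_ifs <;> omega
    rw [e2]; exact h3

/-- Let `I ⊇ P + J` be a monomial ideal with `J` strongly stable, let `I'` be generated by
all minimal generators of `I` except `b^{e_b}`, let `T'` be the `{a,b}`-compression of `I'`
and `T = T' + P`.  Then `J ⊆ T`. -/
theorem stmt6 {n : ℕ} (r : ℕ) (hrn : r ≤ n) (e : Fin n → ℕ)
    (he2 : ∀ i : Fin n, (i : ℕ) < r → 2 ≤ e i)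
    (hemono : ∀ i j : Fin n, i ≤ j → (j : ℕ) < r → e i ≤ e j)
    (I J : Set (Mon n)) (hImon : IsMonSet I) (hJmon : IsMonSet J)
    (hss : StronglyStable J) (hPI : powersIdeal e r ⊆ I) (hJI : J ⊆ I)
    (a b : Fin n) (hab : a < b) (hbr : (b : ℕ) < r) :
    J ⊆ Compress (extIdeal (minGens I \ {Finsupp.single b (e b)})) a b ∪
      powersIdeal e r := by
  intro m hm
  by_cases hmP : m ∈ powersIdeal e r
  · exact Or.inr hmP
  left
  have hlt : ∀ i : Fin n, (i : ℕ) < r → m i < e i := by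
    intro i hi
    by_contra h
    exact hmP ⟨i, hi, le_of_not_gt h⟩
  set p := m a with hp
  set q := m b with hq
  set f : Mon n := (m.erase a).erase b with hf
  have hfa : f a = 0 := by
    rw [hf, Finsupp.erase_ne (ne_of_lt hab).symm.symm, Finsupp.erase_same]
  have hfb : f b = 0 := by rw [hf, Finsupp.erase_same]
  have hne : a ≠ b := ne_of_lt hab
  have hmeq : m = f + Finsupp.single a p + Finsupp.single b q := by
    ext k
    by_cases hka : k = a
    · subst hka
      simp [hfa, Finsupp.single_apply, hne, hne.symm, hp]
    · by_cases hkb : k = b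
      · subst hkb
        simp [hfb, Finsupp.single_apply, hne, hne.symm, hq]
      · simp [hf, Finsupp.erase_ne hkb, Finsupp.erase_ne hka,
          Finsupp.single_apply, Ne.symm hka, Ne.symm hkb]
  set I' := extIdeal (minGens I \ {Finsupp.single b (e b)}) with hI'
  have hqe : q < e b := hlt b hbr
  -- the key: every shifted monomial is in I'
  have hkey : ∀ q' : ℕ, q' ≤ q → f + Finsupp.single a (p + (q - q')) + Finsupp.single b q' ∈ I' := by
    intro q' hq'
    have hJmem : f + Finsupp.single a (p + (q - q')) + Finsupp.single b (q - (q - q')) ∈ J := by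
      apply transfer hss hab f p q (hmeq ▸ hm) (q - q') (Nat.sub_le q q')
    rw [show q - (q - q') = q' by omega] at hJmem
    have hImem := hJI hJmem
    obtain ⟨g, hg, hgle⟩ := exists_minGen I _ hImem
    refine ⟨g, ⟨hg, ?_⟩, hgle⟩
    intro hgb
    simp only [Set.mem_singleton_iff] at hgb
    have := hgle b
    rw [hgb] at this
    simp only [Finsupp.add_apply, Finsupp.single_apply, hfb] at this
    rw [if_pos trivial, if_pos trivial, if_neg hne] at this
    omega
  refine ⟨f, p, q, hfa, hfb, hmeq, ?_⟩
  -- count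
  have hsub : Set.Iic q ⊆ {q' : ℕ | ∃ p', p' + q' = p + q ∧
      f + Finsupp.single a p' + Finsupp.single b q' ∈ I'} := by
    intro q' hq'
    simp only [Set.mem_Iic] at hq'
    exact ⟨p + (q - q'), by omega, hkey q' hq'⟩
  have hfin : {q' : ℕ | ∃ p', p' + q' = p + q ∧
      f + Finsupp.single a p' + Finsupp.single b q' ∈ I'}.Finite := by
    apply Set.Finite.subset (Set.finite_Iic (p + q))
    rintro q' ⟨p', hpq, -⟩
    simp only [Set.mem_Iic]; omega
  have hcard : q + 1 ≤ fiberCount I' a b f (p + q) := by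
    rw [fiberCount]
    calc q + 1 = (Set.Iic q).ncard := by
          rw [← Finset.coe_Iic, Set.ncard_coe_finset, Nat.card_Iic]
      _ ≤ _ := Set.ncard_le_ncard hsub hfin
  omega
end

section
/- For a monomial ideal I in K[x_1,...,x_n] and variables a >_lex b, the (a,b,t)-shift of I has the same Hilbert function as I. -/
open Finsupp

noncomputable section
namespace Sh

variable {n : ℕ}

/-- The part of a monomial away from the variables `a`, `b`. -/
def ee (a b : Fin n) (g : Mon n) : Mon n := (g.erase a).erase b

lemma ee_a {a b : Fin n} (hab : a ≠ b) (g : Mon n) : ee a b g a = 0 := by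
  simp [ee, Finsupp.erase_ne hab, Finsupp.erase_same]

lemma ee_b (a b : Fin n) (g : Mon n) : ee a b g b = 0 := by
  simp [ee, Finsupp.erase_same]

lemma decomp {a b : Fin n} (hab : a ≠ b) (g : Mon n) :
    ee a b g + Finsupp.single a (g a) + Finsupp.single b (g b) = g := by
  ext i
  simp only [ee, Finsupp.add_apply, Finsupp.erase_apply, Finsupp.single_apply]
  split_ifs <;> subst_vars <;> simp_all

lemma eval_a {a b : Fin n} (hab : a ≠ b) {f : Mon n} (hfa : f a = 0) (s r : ℕ) :
    (f + Finsupp.single a s + Finsupp.single b r) a = s := by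
  simp [Finsupp.add_apply, hfa, Finsupp.single_eq_of_ne' (Ne.symm hab)]

lemma eval_b {a b : Fin n} (hab : a ≠ b) {f : Mon n} (hfb : f b = 0) (s r : ℕ) :
    (f + Finsupp.single a s + Finsupp.single b r) b = r := by
  simp [Finsupp.add_apply, hfb, Finsupp.single_eq_of_ne' hab]

lemma ee_eval {a b : Fin n} (hab : a ≠ b) {f : Mon n} (hfa : f a = 0) (hfb : f b = 0)
    (s r : ℕ) : ee a b (f + Finsupp.single a s + Finsupp.single b r) = f := by
  ext i
  simp only [ee, Finsupp.erase_apply, Finsupp.add_apply, Finsupp.single_apply]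
  split_ifs <;> subst_vars <;> simp_all

/-- The mirror of `g = f·a^s·b^r` (with `r ≥ t`) is `f·a^(r-t)·b^(s+t)`. -/
def mir (a b : Fin n) (t : ℕ) (g : Mon n) : Mon n :=
  ee a b g + Finsupp.single a (g b - t) + Finsupp.single b (g a + t)

lemma mir_a {a b : Fin n} (hab : a ≠ b) (t : ℕ) (g : Mon n) :
    mir a b t g a = g b - t := eval_a hab (ee_a hab g) _ _

lemma mir_b {a b : Fin n} (hab : a ≠ b) (t : ℕ) (g : Mon n) :
    mir a b t g b = g a + t := eval_b hab (ee_b a b g) _ _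

lemma mir_mir {a b : Fin n} (hab : a ≠ b) {t : ℕ} {g : Mon n} (ht : t ≤ g b) :
    mir a b t (mir a b t g) = g := by
  unfold mir
  rw [ee_eval hab (ee_a hab g) (ee_b a b g), eval_a hab (ee_a hab g),
    eval_b hab (ee_b a b g), Nat.add_sub_cancel, Nat.sub_add_cancel ht, decomp hab]

lemma mdeg_eq (m : Mon n) : mdeg m = ∑ i, m i :=
  Finsupp.sum_fintype _ _ (fun _ => rfl)

lemma mdeg_add (u v : Mon n) : mdeg (u + v) = mdeg u + mdeg v := by
  simp [mdeg_eq, Finset.sum_add_distrib]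

lemma mdeg_single (i : Fin n) (k : ℕ) : mdeg (Finsupp.single i k) = k := by
  simp [mdeg_eq, Finsupp.single_apply]

lemma mdeg_mir {a b : Fin n} (hab : a ≠ b) {t : ℕ} {g : Mon n} (ht : t ≤ g b) :
    mdeg (mir a b t g) = mdeg g := by
  conv_rhs => rw [← decomp hab g]
  simp only [mir, mdeg_add, mdeg_single]
  omega

/-- Characterization of shift membership in terms of the exponents of `a`, `b`
and the mirror map. -/
lemma inShift_iff {I : Set (Mon n)} {a b : Fin n} (hab : a ≠ b) {t : ℕ} (g : Mon n) :
    InShift I a b t g ↔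
      (g b < t ∧ g ∈ I) ∨
      (g b = g a + t ∧ g ∈ I) ∨
      (t ≤ g b ∧ g b < g a + t ∧ (g ∈ I ∨ mir a b t g ∈ I)) ∨
      (g a + t < g b ∧ g ∈ I ∧ mir a b t g ∈ I) := by
  constructor
  · rintro ⟨f, hfa, hfb, hc⟩
    rcases hc with ⟨s, r, hrt, rfl, hI⟩ | ⟨s, rfl, hI⟩ |
        ⟨s, l, hsl, rfl, hI⟩ | ⟨s, l, hsl, rfl, hI1, hI2⟩
    · left
      rw [eval_b hab hfb]
      exact ⟨hrt, hI⟩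
    · right; left
      rw [eval_a hab hfa, eval_b hab hfb]
      exact ⟨rfl, hI⟩
    · right; right; left
      rw [eval_a hab hfa, eval_b hab hfb]
      refine ⟨Nat.le_add_left t s, by omega, ?_⟩
      have hm : mir a b t (f + Finsupp.single a l + Finsupp.single b (s + t)) =
          f + Finsupp.single a s + Finsupp.single b (l + t) := by
        unfold mir
        rw [ee_eval hab hfa hfb, eval_a hab hfa, eval_b hab hfb, Nat.add_sub_cancel]
      rw [hm]
      exact hI
    · right; right; right
      rw [eval_a hab hfa, eval_b hab hfb]
      have hm : mir a b t (f + Finsupp.single a s + Finsupp.single b (l + t)) =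
          f + Finsupp.single a l + Finsupp.single b (s + t) := by
        unfold mir
        rw [ee_eval hab hfa hfb, eval_a hab hfa, eval_b hab hfb, Nat.add_sub_cancel]
      rw [hm]
      exact ⟨by omega, hI2, hI1⟩
  · rintro (⟨h1, h2⟩ | ⟨h1, h2⟩ | ⟨h1, h2, h3⟩ | ⟨h1, h2, h3⟩)
    · exact ⟨ee a b g, ee_a hab g, ee_b a b g,
        Or.inl ⟨g a, g b, h1, (decomp hab g).symm, h2⟩⟩
    · refine ⟨ee a b g, ee_a hab g, ee_b a b g, Or.inr (Or.inl ⟨g a, ?_, h2⟩)⟩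
      rw [← h1]
      exact (decomp hab g).symm
    · refine ⟨ee a b g, ee_a hab g, ee_b a b g,
        Or.inr (Or.inr (Or.inl ⟨g b - t, g a, by omega, ?_, ?_⟩))⟩
      · rw [Nat.sub_add_cancel h1]
        exact (decomp hab g).symm
      · rw [Nat.sub_add_cancel h1, decomp hab g]
        rcases h3 with h3 | h3
        · exact Or.inl h3
        · exact Or.inr h3
    · refine ⟨ee a b g, ee_a hab g, ee_b a b g,
        Or.inr (Or.inr (Or.inr ⟨g a, g b - t, by omega, ?_, ?_, ?_⟩))⟩
      · rw [Nat.sub_add_cancel (by omega)]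
        exact (decomp hab g).symm
      · exact h3
      · rw [Nat.sub_add_cancel (by omega), decomp hab g]
        exact h2

end Sh
end

open Sh in
/-- The `(a,b,t)`-shift of a monomial ideal has the same Hilbert function:
in each degree it contains as many monomials as `I` does. -/
theorem stmt7 {n : ℕ} (I : Set (Mon n)) (hmon : IsMonSet I)
    (a b : Fin n) (hab : a < b) (t : ℕ) :
    ∀ d : ℕ, Set.ncard {m : Mon n | m ∈ I ∧ mdeg m = d} =
      Set.ncard {m : Mon n | InShift I a b t m ∧ mdeg m = d} := by
  intro d
  classical
  have hab' : a ≠ b := ne_of_lt hab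
  set φ : Mon n → Mon n :=
    fun g => if g a + t < g b ∧ mir a b t g ∉ I then mir a b t g else g with hφ
  have hinj : Set.InjOn φ {m : Mon n | m ∈ I ∧ mdeg m = d} := by
    intro g1 hg1 g2 hg2 heq
    simp only [hφ] at heq
    split_ifs at heq with h1 h2 h2
    · have e := congrArg (mir a b t) heq
      rwa [mir_mir hab' (by omega : t ≤ g1 b), mir_mir hab' (by omega : t ≤ g2 b)] at e
    · exact absurd (heq ▸ h1.2) (fun h => h hg2.1)
    · exact absurd (heq ▸ hg1.1) h2.2
    · exact heq
  have himg : φ '' {m : Mon n | m ∈ I ∧ mdeg m = d}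
      = {m : Mon n | InShift I a b t m ∧ mdeg m = d} := by
    ext h
    constructor
    · rintro ⟨g, ⟨hgI, hgd⟩, rfl⟩
      simp only [hφ]
      split_ifs with hc
      · -- image is `mir g`, in shift via case 3 (right disjunct)
        obtain ⟨hlt, hnm⟩ := hc
        have htb : t ≤ g b := by omega
        refine ⟨?_, by rw [mdeg_mir hab' htb]; exact hgd⟩
        rw [inShift_iff hab']
        right; right; left
        rw [mir_a hab', mir_b hab', mir_mir hab' htb]
        exact ⟨by omega, by omega, Or.inr hgI⟩
      · refine ⟨?_, hgd⟩
        rw [inShift_iff hab']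
        push_neg at hc
        rcases lt_trichotomy (g b) (g a + t) with hlt | heq | hgt
        · rcases lt_or_ge (g b) t with h' | h'
          · exact Or.inl ⟨h', hgI⟩
          · exact Or.inr (Or.inr (Or.inl ⟨h', hlt, Or.inl hgI⟩))
        · exact Or.inr (Or.inl ⟨heq, hgI⟩)
        · exact Or.inr (Or.inr (Or.inr ⟨hgt, hgI, hc hgt⟩))
    · rintro ⟨hsh, hd⟩
      rw [inShift_iff hab'] at hsh
      rcases hsh with ⟨h1, h2⟩ | ⟨h1, h2⟩ | ⟨h1, h2, h3⟩ | ⟨h1, h2, h3⟩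
      · exact ⟨h, ⟨h2, hd⟩, by simp only [hφ]; rw [if_neg (by omega)]⟩
      · exact ⟨h, ⟨h2, hd⟩, by simp only [hφ]; rw [if_neg (by omega)]⟩
      · rcases h3 with h3 | h3
        · exact ⟨h, ⟨h3, hd⟩, by simp only [hφ]; rw [if_neg (by omega)]⟩
        · by_cases hI : h ∈ I
          · exact ⟨h, ⟨hI, hd⟩, by simp only [hφ]; rw [if_neg (by omega)]⟩
          · refine ⟨mir a b t h, ⟨h3, by rw [mdeg_mir hab' h1]; exact hd⟩, ?_⟩
            have hc1 : mir a b t h a + t < mir a b t h b := by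
              rw [mir_a hab', mir_b hab']; omega
            have hc2 : mir a b t (mir a b t h) ∉ I := by
              rw [mir_mir hab' h1]; exact hI
            simp only [hφ]
            rw [if_pos ⟨hc1, hc2⟩, mir_mir hab' h1]
      · refine ⟨h, ⟨h2, hd⟩, ?_⟩
        simp only [hφ]
        rw [if_neg (fun hc => hc.2 h3)]
  rw [← himg, Set.ncard_image_of_injOn hinj]
end

section
/- The {a,b}-compression of a monomial ideal I in K[x_1,...,x_n] is a monomial ideal with the same Hilbert function as I. -/
open Finsupp

namespace Stmt8Aux

/-! ### A rank function on finite sets of naturals -/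

/-- The number of elements of `T` strictly below `t`. -/
def rk (T : Finset ℕ) (t : ℕ) : ℕ := (T.filter (· < t)).card

lemma rk_lt_card {T : Finset ℕ} {t : ℕ} (h : t ∈ T) : rk T t < T.card := by
  refine Finset.card_lt_card ⟨Finset.filter_subset _ _, fun hsub => ?_⟩
  have := hsub h
  simp at this

lemma rk_strictMono {T : Finset ℕ} {t₁ t₂ : ℕ} (h₁ : t₁ ∈ T) (h : t₁ < t₂) :
    rk T t₁ < rk T t₂ := by
  refine Finset.card_lt_card ⟨?_, fun hsub => ?_⟩
  · intro x hx
    rw [Finset.mem_filter] at hx ⊢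
    exact ⟨hx.1, by omega⟩
  · have := hsub (Finset.mem_filter.mpr ⟨h₁, by simpa using h⟩)
    simp at this

lemma rk_injOn {T : Finset ℕ} {t₁ t₂ : ℕ} (h₁ : t₁ ∈ T) (h₂ : t₂ ∈ T)
    (h : rk T t₁ = rk T t₂) : t₁ = t₂ := by
  rcases lt_trichotomy t₁ t₂ with hlt | heq | hgt
  · have := rk_strictMono h₁ hlt; omega
  · exact heq
  · have := rk_strictMono h₂ hgt; omega

lemma rk_surj {T : Finset ℕ} {k : ℕ} (hk : k < T.card) : ∃ t ∈ T, rk T t = k := by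
  classical
  have himg : T.image (rk T) = Finset.range T.card := by
    apply Finset.eq_of_subset_of_card_le
    · intro x hx
      obtain ⟨t, ht, rfl⟩ := Finset.mem_image.mp hx
      exact Finset.mem_range.mpr (rk_lt_card ht)
    · rw [Finset.card_range,
        Finset.card_image_of_injOn (fun t₁ h₁ t₂ h₂ h => rk_injOn h₁ h₂ h)]
  have : k ∈ T.image (rk T) := himg ▸ Finset.mem_range.mpr hk
  simpa using Finset.mem_image.mp this

/-! ### Generalities on monomials -/

variable {n : ℕ}

lemma mdeg_add (u v : Mon n) : mdeg (u + v) = mdeg u + mdeg v := by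
  simp [mdeg, Finsupp.sum_add_index']

lemma mdeg_single (i : Fin n) (k : ℕ) : mdeg (Finsupp.single i k) = k := by
  simp [mdeg, Finsupp.sum_single_index]

variable {a b : Fin n}

lemma decomp (hab : a ≠ b) (m : Mon n) :
    Finsupp.erase b (Finsupp.erase a m) + Finsupp.single a (m a) + Finsupp.single b (m b)
      = m := by
  ext j
  simp only [Finsupp.add_apply, Finsupp.erase_apply, Finsupp.single_apply]
  by_cases hja : a = j
  · subst hja
    simp [hab, Ne.symm hab]
  · by_cases hjb : b = j
    · subst hjb
      simp [hab, Ne.symm hab]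
    · simp [hja, hjb, Ne.symm hja, Ne.symm hjb]

lemma repr_a (hab : a ≠ b) {f : Mon n} (hfa : f a = 0) (p q : ℕ) :
    (f + Finsupp.single a p + Finsupp.single b q) a = p := by
  simp [Finsupp.single_apply, hfa, Ne.symm hab]

lemma repr_b (hab : a ≠ b) {f : Mon n} (hfb : f b = 0) (p q : ℕ) :
    (f + Finsupp.single a p + Finsupp.single b q) b = q := by
  simp [Finsupp.single_apply, hfb, fun h : a = b => hab h]

lemma repr_f (hab : a ≠ b) {f : Mon n} (hfa : f a = 0) (hfb : f b = 0) (p q : ℕ) :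
    Finsupp.erase b (Finsupp.erase a (f + Finsupp.single a p + Finsupp.single b q)) = f := by
  ext j
  simp only [Finsupp.erase_apply, Finsupp.add_apply, Finsupp.single_apply]
  by_cases hja : a = j
  · subst hja
    simp [hab, Ne.symm hab, hfa]
  · by_cases hjb : b = j
    · subst hjb
      simp [hab, hfb]
    · simp [hja, hjb, Ne.symm hja, Ne.symm hjb]

/-! ### The fiber finsets -/

open Classical in
/-- The finset of `b`-exponents `q` with `f·a^(e-q)·b^q ∈ I`. -/
noncomputable def fiberT (I : Set (Mon n)) (a b : Fin n) (f : Mon n) (e : ℕ) : Finset ℕ :=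
  (Finset.range (e+1)).filter fun q => f + Finsupp.single a (e - q) + Finsupp.single b q ∈ I

lemma mem_fiberT {I : Set (Mon n)} {f : Mon n} {e q : ℕ} :
    q ∈ fiberT I a b f e ↔ q ≤ e ∧ f + Finsupp.single a (e - q) + Finsupp.single b q ∈ I := by
  simp [fiberT, Nat.lt_succ_iff]

lemma fiberT_card_le {I : Set (Mon n)} {f : Mon n} {e : ℕ} :
    (fiberT I a b f e).card ≤ e + 1 := by
  calc (fiberT I a b f e).card ≤ (Finset.range (e+1)).card := Finset.card_le_card (by
        intro x hx
        rw [mem_fiberT] at hx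
        exact Finset.mem_range.mpr (by omega))
    _ = e + 1 := Finset.card_range _

lemma fiberCount_eq (I : Set (Mon n)) (a b : Fin n) (f : Mon n) (e : ℕ) :
    fiberCount I a b f e = (fiberT I a b f e).card := by
  rw [fiberCount, ← Set.ncard_coe_finset]
  refine congrArg Set.ncard (Set.ext fun q => ?_)
  simp only [Set.mem_setOf_eq, Finset.mem_coe, mem_fiberT]
  constructor
  · rintro ⟨p, hpq, h⟩
    refine ⟨by omega, ?_⟩
    rwa [show e - q = p by omega]
  · rintro ⟨hq, h⟩
    exact ⟨e - q, by omega, h⟩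

/-- Characterization of membership in `I` in terms of the fiber finset. -/
lemma mem_I_iff (hab : a ≠ b) {I : Set (Mon n)} (m : Mon n) :
    m ∈ I ↔ m b ∈ fiberT I a b (Finsupp.erase b (Finsupp.erase a m)) (m a + m b) := by
  rw [mem_fiberT, show m a + m b - m b = m a by omega]
  constructor
  · intro h
    exact ⟨by omega, by rwa [decomp hab m]⟩
  · rintro ⟨-, h⟩
    rwa [decomp hab m] at h

/-- Characterization of membership in the compression. -/
lemma mem_C_iff (hab : a ≠ b) {I : Set (Mon n)} (g : Mon n) :
    g ∈ Compress I a b ↔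
      g b < (fiberT I a b (Finsupp.erase b (Finsupp.erase a g)) (g a + g b)).card := by
  constructor
  · rintro ⟨f, p, q, hfa, hfb, rfl, hq⟩
    rw [repr_f hab hfa hfb, repr_a hab hfa, repr_b hab hfb]
    rwa [fiberCount_eq] at hq
  · intro h
    refine ⟨Finsupp.erase b (Finsupp.erase a g), g a, g b, ?_, ?_, (decomp hab g).symm, ?_⟩
    · simp [Finsupp.erase_apply, fun h : a = b => hab h]
    · simp [Finsupp.erase_apply]
    · rwa [fiberCount_eq]

lemma fiberT_mono_deg {I : Set (Mon n)} (hmon : IsMonSet I) (f : Mon n) (e : ℕ) :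
    fiberT I a b f e ⊆ fiberT I a b f (e+1) := by
  intro q hq
  rw [mem_fiberT] at hq ⊢
  obtain ⟨hqe, hmem⟩ := hq
  refine ⟨by omega, ?_⟩
  have h2 := hmon _ hmem (Finsupp.single a 1)
  have heq : f + Finsupp.single a (e + 1 - q) + Finsupp.single b q
      = f + Finsupp.single a (e - q) + Finsupp.single b q + Finsupp.single a 1 := by
    rw [show e + 1 - q = (e - q) + 1 by omega, Finsupp.single_add]
    abel
  rwa [heq]

lemma fiberT_card_succ {I : Set (Mon n)} (hmon : IsMonSet I) (f : Mon n) (e : ℕ)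
    (hne : (fiberT I a b f e).Nonempty) :
    (fiberT I a b f e).card + 1 ≤ (fiberT I a b f (e+1)).card := by
  set T := fiberT I a b f e with hT
  set M := T.max' hne with hM
  have hMmem : M ∈ T := T.max'_mem hne
  have hMnotmem : M + 1 ∉ T := fun h => by
    have := T.le_max' _ h
    omega
  have hstep : M + 1 ∈ fiberT I a b f (e+1) := by
    rw [mem_fiberT]
    rw [hT, mem_fiberT] at hMmem
    obtain ⟨hMe, hmem⟩ := hMmem
    refine ⟨by omega, ?_⟩
    have h2 := hmon _ hmem (Finsupp.single b 1)
    have heq : f + Finsupp.single a (e + 1 - (M + 1)) + Finsupp.single b (M + 1)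
        = f + Finsupp.single a (e - M) + Finsupp.single b M + Finsupp.single b 1 := by
      rw [show e + 1 - (M + 1) = e - M by omega, Finsupp.single_add]
      abel
    rwa [heq]
  calc T.card + 1 = (insert (M+1) T).card := (Finset.card_insert_of_notMem hMnotmem).symm
    _ ≤ (fiberT I a b f (e+1)).card := Finset.card_le_card (by
        intro x hx
        rcases Finset.mem_insert.mp hx with rfl | hx
        · exact hstep
        · exact fiberT_mono_deg hmon f e hx)

lemma fiberT_mono_f {I : Set (Mon n)} (hmon : IsMonSet I) (f : Mon n) (i : Fin n) (e : ℕ) :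
    fiberT I a b f e ⊆ fiberT I a b (f + Finsupp.single i 1) e := by
  intro q hq
  rw [mem_fiberT] at hq ⊢
  obtain ⟨hqe, hmem⟩ := hq
  refine ⟨hqe, ?_⟩
  have h2 := hmon _ hmem (Finsupp.single i 1)
  have heq : f + Finsupp.single i 1 + Finsupp.single a (e - q) + Finsupp.single b q
      = f + Finsupp.single a (e - q) + Finsupp.single b q + Finsupp.single i 1 := by abel
  rwa [heq]

end Stmt8Aux

open Stmt8Aux in
/-- The `{a,b}`-compression of a monomial ideal is a monomial ideal with the same
Hilbert function. -/
theorem stmt8 {n : ℕ} (I : Set (Mon n)) (hmon : IsMonSet I)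
    (a b : Fin n) (hab : a < b) :
    IsMonSet (Compress I a b) ∧
    ∀ d : ℕ, Set.ncard {m : Mon n | m ∈ I ∧ mdeg m = d} =
      Set.ncard {m : Mon n | m ∈ Compress I a b ∧ mdeg m = d} := by
  have hne : a ≠ b := ne_of_lt hab
  constructor
  · -- IsMonSet
    have step : ∀ g ∈ Compress I a b, ∀ i : Fin n, g + Finsupp.single i 1 ∈ Compress I a b := by
      rintro g ⟨f, p, q, hfa, hfb, rfl, hq⟩ i
      rw [fiberCount_eq] at hq
      by_cases hia : a = i
      · subst hia
        refine ⟨f, p + 1, q, hfa, hfb, by rw [Finsupp.single_add]; abel, ?_⟩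
        rw [fiberCount_eq, show p + 1 + q = (p + q) + 1 by ring]
        exact lt_of_lt_of_le hq (Finset.card_le_card (fiberT_mono_deg hmon f (p+q)))
      · by_cases hib : b = i
        · subst hib
          refine ⟨f, p, q + 1, hfa, hfb, by rw [Finsupp.single_add]; abel, ?_⟩
          rw [fiberCount_eq, show p + (q + 1) = (p + q) + 1 by ring]
          have hnonempty : (fiberT I a b f (p+q)).Nonempty := by
            rw [← Finset.card_pos]; omega
          have := fiberT_card_succ hmon f (p+q) hnonempty
          omega
        · refine ⟨f + Finsupp.single i 1, p, q, ?_, ?_, by abel, ?_⟩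
          · simp [Finsupp.single_apply, hfa, Ne.symm hia]
          · simp [Finsupp.single_apply, hfb, Ne.symm hib]
          · rw [fiberCount_eq]
            exact lt_of_lt_of_le hq (Finset.card_le_card (fiberT_mono_f hmon f i (p+q)))
    have single_k : ∀ g ∈ Compress I a b, ∀ i : Fin n, ∀ k : ℕ,
        g + Finsupp.single i k ∈ Compress I a b := by
      intro g hg i k
      induction k with
      | zero => simpa using hg
      | succ k ih =>
        have h2 := step _ ih i
        have heq : g + Finsupp.single i (k + 1)
            = g + Finsupp.single i k + Finsupp.single i 1 := by
          rw [Finsupp.single_add]; abel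
        rwa [heq]
    intro m hm f
    induction f using Finsupp.induction with
    | zero => simpa using hm
    | single_add i k f' _ _ ih =>
      have h2 := single_k _ ih i k
      have heq : m + (Finsupp.single i k + f') = m + f' + Finsupp.single i k := by abel
      rwa [heq]
  · -- Hilbert function
    intro d
    refine Set.ncard_congr
      (fun m _ =>
        Finsupp.erase b (Finsupp.erase a m)
          + Finsupp.single a (m a + m b
              - rk (fiberT I a b (Finsupp.erase b (Finsupp.erase a m)) (m a + m b)) (m b))
          + Finsupp.single b
              (rk (fiberT I a b (Finsupp.erase b (Finsupp.erase a m)) (m a + m b)) (m b)))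
      ?_ ?_ ?_
    · -- maps into target
      rintro m ⟨hmI, hmd⟩
      set f := Finsupp.erase b (Finsupp.erase a m) with hf
      set T := fiberT I a b f (m a + m b) with hT
      set k := rk T (m b) with hk
      have hfa : f a = 0 := by
        rw [hf]; simp [Finsupp.erase_apply, fun h : a = b => hne h]
      have hfb : f b = 0 := by rw [hf]; simp [Finsupp.erase_apply]
      have hmemT : m b ∈ T := (mem_I_iff hne m).mp hmI
      have hkcard : k < T.card := rk_lt_card hmemT
      have hcardle : T.card ≤ m a + m b + 1 := fiberT_card_le
      have hke : k ≤ m a + m b := by omega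
      constructor
      · rw [mem_C_iff hne, repr_f hne hfa hfb, repr_a hne hfa, repr_b hne hfb,
          show m a + m b - k + k = m a + m b by omega]
        exact hkcard
      · have h2 : mdeg m = mdeg f + (m a + m b) := by
          conv_lhs => rw [← decomp hne m]
          rw [mdeg_add, mdeg_add, mdeg_single, mdeg_single, ← hf]
          ring
        rw [mdeg_add, mdeg_add, mdeg_single, mdeg_single]
        omega
    · -- injective
      rintro m₁ m₂ ⟨hm₁, hd₁⟩ ⟨hm₂, hd₂⟩ heq
      have hfa₁ : (Finsupp.erase b (Finsupp.erase a m₁)) a = 0 := by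
        simp [Finsupp.erase_apply, fun h : a = b => hne h]
      have hfb₁ : (Finsupp.erase b (Finsupp.erase a m₁)) b = 0 := by
        simp [Finsupp.erase_apply]
      have hfa₂ : (Finsupp.erase b (Finsupp.erase a m₂)) a = 0 := by
        simp [Finsupp.erase_apply, fun h : a = b => hne h]
      have hfb₂ : (Finsupp.erase b (Finsupp.erase a m₂)) b = 0 := by
        simp [Finsupp.erase_apply]
      have hmem₁ : m₁ b ∈ fiberT I a b (Finsupp.erase b (Finsupp.erase a m₁)) (m₁ a + m₁ b) :=
        (mem_I_iff hne m₁).mp hm₁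
      have hmem₂ : m₂ b ∈ fiberT I a b (Finsupp.erase b (Finsupp.erase a m₂)) (m₂ a + m₂ b) :=
        (mem_I_iff hne m₂).mp hm₂
      have hff : Finsupp.erase b (Finsupp.erase a m₁) = Finsupp.erase b (Finsupp.erase a m₂) := by
        have := congrArg (fun g => Finsupp.erase b (Finsupp.erase a g)) heq
        simpa only [repr_f hne hfa₁ hfb₁, repr_f hne hfa₂ hfb₂] using this
      have hkk : rk (fiberT I a b (Finsupp.erase b (Finsupp.erase a m₁)) (m₁ a + m₁ b)) (m₁ b)
          = rk (fiberT I a b (Finsupp.erase b (Finsupp.erase a m₂)) (m₂ a + m₂ b)) (m₂ b) := by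
        have := congrArg (fun g => g b) heq
        simpa only [repr_b hne hfb₁, repr_b hne hfb₂] using this
      have hk₁e : rk (fiberT I a b (Finsupp.erase b (Finsupp.erase a m₁)) (m₁ a + m₁ b)) (m₁ b)
          ≤ m₁ a + m₁ b := by
        have h1 := rk_lt_card hmem₁
        have h2 := fiberT_card_le (I := I) (a := a) (b := b)
          (f := Finsupp.erase b (Finsupp.erase a m₁)) (e := m₁ a + m₁ b)
        omega
      have hk₂e : rk (fiberT I a b (Finsupp.erase b (Finsupp.erase a m₂)) (m₂ a + m₂ b)) (m₂ b)
          ≤ m₂ a + m₂ b := by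
        have h1 := rk_lt_card hmem₂
        have h2 := fiberT_card_le (I := I) (a := a) (b := b)
          (f := Finsupp.erase b (Finsupp.erase a m₂)) (e := m₂ a + m₂ b)
        omega
      have hee : m₁ a + m₁ b = m₂ a + m₂ b := by
        have := congrArg (fun g => g a) heq
        simp only [repr_a hne hfa₁, repr_a hne hfa₂] at this
        omega
      have hTT : fiberT I a b (Finsupp.erase b (Finsupp.erase a m₁)) (m₁ a + m₁ b)
          = fiberT I a b (Finsupp.erase b (Finsupp.erase a m₂)) (m₂ a + m₂ b) := by
        rw [hff, hee]
      have hb : m₁ b = m₂ b := by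
        refine rk_injOn hmem₁ (hTT ▸ hmem₂) ?_
        rw [hkk, hTT]
      have ha : m₁ a = m₂ a := by omega
      calc m₁ = Finsupp.erase b (Finsupp.erase a m₁)
            + Finsupp.single a (m₁ a) + Finsupp.single b (m₁ b) := (decomp hne m₁).symm
        _ = Finsupp.erase b (Finsupp.erase a m₂)
            + Finsupp.single a (m₂ a) + Finsupp.single b (m₂ b) := by rw [hff, ha, hb]
        _ = m₂ := decomp hne m₂
    · -- surjective
      rintro g ⟨hgC, hgd⟩
      have hfa : (Finsupp.erase b (Finsupp.erase a g)) a = 0 := by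
        simp [Finsupp.erase_apply, fun h : a = b => hne h]
      have hfb : (Finsupp.erase b (Finsupp.erase a g)) b = 0 := by
        simp [Finsupp.erase_apply]
      have hq : g b < (fiberT I a b (Finsupp.erase b (Finsupp.erase a g)) (g a + g b)).card :=
        (mem_C_iff hne g).mp hgC
      obtain ⟨t, htT, hrkt⟩ := rk_surj hq
      have hte : t ≤ g a + g b := (mem_fiberT.mp htT).1
      set m : Mon n := Finsupp.erase b (Finsupp.erase a g)
          + Finsupp.single a (g a + g b - t) + Finsupp.single b t with hm
      have hmI : m ∈ I := by
        have := (mem_fiberT.mp htT).2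
        rwa [hm]
      have hma : m a = g a + g b - t := by rw [hm]; exact repr_a hne hfa _ _
      have hmb : m b = t := by rw [hm]; exact repr_b hne hfb _ _
      have hmf : Finsupp.erase b (Finsupp.erase a m) = Finsupp.erase b (Finsupp.erase a g) := by
        rw [hm]; exact repr_f hne hfa hfb _ _
      have hme : m a + m b = g a + g b := by omega
      have hmd : mdeg m = d := by
        have h1 : mdeg m = mdeg (Finsupp.erase b (Finsupp.erase a g)) + (g a + g b) := by
          rw [hm, mdeg_add, mdeg_add, mdeg_single, mdeg_single]
          omega
        have h2 : mdeg g = mdeg (Finsupp.erase b (Finsupp.erase a g)) + (g a + g b) := by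
          conv_lhs => rw [← decomp hne g]
          rw [mdeg_add, mdeg_add, mdeg_single, mdeg_single]
          ring
        omega
      refine ⟨m, ⟨hmI, hmd⟩, ?_⟩
      rw [hmf, hme, hmb, hrkt, show g a + g b - g b = g a by omega]
      exact decomp hne g
end

section
/- If L̃ = L_(1)A + ... + L_(n)A is a piecewise lex ideal in A = K[x_1,...,x_n] and m is a monomial in L̃ with m = m'·a^α·b^β for variables a >_lex b with a, b not dividing m', and N = β − (α + t) > 0 for an integer t ≥ 0, then m·a^N/b^N = m'·a^(β−t)·b^(α+t) is a monomial in L̃. -/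
open Finsupp

/-- `m` involves only the first `i` variables. -/
def SupportedOn {n : ℕ} (i : ℕ) (m : Mon n) : Prop :=
  ∀ j : Fin n, i ≤ (j : ℕ) → m j = 0

/-- `L` is (the monomial set of) a lex ideal of `K[x_1,...,x_i]`. -/
def IsLexOn {n : ℕ} (i : ℕ) (L : Set (Mon n)) : Prop :=
  (∀ m ∈ L, SupportedOn i m) ∧
  (∀ m ∈ L, ∀ f : Mon n, SupportedOn i f → m + f ∈ L) ∧
  (∀ u v : Mon n, SupportedOn i u → mdeg u = mdeg v → v ∈ L → LexGT u v → u ∈ L)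

/-- `S` is the monomial set of a piecewise lex ideal `L̃ = L_(1)A + ... + L_(n)A`. -/
def IsPiecewiseLex {n : ℕ} (S : Set (Mon n)) : Prop :=
  ∃ L : Fin n → Set (Mon n),
    (∀ i : Fin n, IsLexOn ((i : ℕ) + 1) (L i)) ∧ S = ⋃ i, extIdeal (L i)

lemma mdeg_add {n : ℕ} (x y : Mon n) : mdeg (x + y) = mdeg x + mdeg y := by
  unfold mdeg
  exact Finsupp.sum_add_index' (fun _ => rfl) (fun _ _ _ => rfl)

lemma mdeg_single {n : ℕ} (j : Fin n) (c : ℕ) : mdeg (Finsupp.single j c) = c := by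
  unfold mdeg
  exact Finsupp.sum_single_index rfl

/-- If `L̃` is piecewise lex, `m = m'·a^α·b^β ∈ L̃` with `a,b ∤ m'`, `a >_lex b`
(i.e. `a < b` as indices) and `N = β - (α + t) > 0`, then

 `m·a^N/b^N = m'·a^(β-t)·b^(α+t) ∈ L̃`. -/
theorem stmt9 {n : ℕ} (S : Set (Mon n)) (hS : IsPiecewiseLex S)
    (a b : Fin n) (hab : a < b) (m' : Mon n) (hma : m' a = 0) (hmb : m' b = 0)
    (α β t : ℕ) (hN : 0 < β - (α + t))
    (hmem : m' + Finsupp.single a α + Finsupp.single b β ∈ S) :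
    m' + Finsupp.single a (β - t) + Finsupp.single b (α + t) ∈ S := by
  classical
  obtain ⟨L, hL, rfl⟩ := hS
  simp only [Set.mem_iUnion] at hmem ⊢
  obtain ⟨i, w, hwL, hw⟩ := hmem
  obtain ⟨hsupp, hmul, hlex⟩ := hL i
  set I := (i : ℕ) + 1 with hI
  have hwsupp := hsupp w hwL
  have htβ : α + t < β := by omega
  by_cases hb : (b : ℕ) < I
  · -- both a and b are among the first I variables
    have ha : (a : ℕ) < I := lt_of_le_of_lt (le_of_lt (by exact_mod_cast hab)) hb
    set P : Fin n → Prop := fun k => (k : ℕ) < I with hP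
    set m'tr : Mon n := m'.filter P with hm'tr
    have hm'tr_apply : ∀ k, m'tr k = if (k : ℕ) < I then m' k else 0 := by
      intro k; simp [hm'tr, Finsupp.filter_apply, hP]
    set mtr : Mon n := m'tr + Finsupp.single a α + Finsupp.single b β with hmtr
    set ttr : Mon n := m'tr + Finsupp.single a (β - t) + Finsupp.single b (α + t) with httr
    have hmtr_apply : ∀ k, mtr k =
        m'tr k + (if a = k then α else 0) + (if b = k then β else 0) := by
      intro k; rw [hmtr]; simp only [Finsupp.add_apply, Finsupp.single_apply]
    have httr_apply : ∀ k, ttr k =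
        m'tr k + (if a = k then β - t else 0) + (if b = k then α + t else 0) := by
      intro k; rw [httr]; simp only [Finsupp.add_apply, Finsupp.single_apply]
    have hmtr_supp : SupportedOn I mtr := by
      intro k hk
      have h1 : m'tr k = 0 := by rw [hm'tr_apply]; simp [Nat.not_lt.mpr hk]
      have h2 : a ≠ k := by rintro rfl; omega
      have h3 : b ≠ k := by rintro rfl; omega
      rw [hmtr_apply]; simp [h1, h2, h3]
    have httr_supp : SupportedOn I ttr := by
      intro k hk
      have h1 : m'tr k = 0 := by rw [hm'tr_apply]; simp [Nat.not_lt.mpr hk]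
      have h2 : a ≠ k := by rintro rfl; omega
      have h3 : b ≠ k := by rintro rfl; omega
      rw [httr_apply]; simp [h1, h2, h3]
    have hw_le : ∀ k, w k ≤ mtr k := by
      intro k
      by_cases hk : (k : ℕ) < I
      · have := hw k
        have hm : mtr k = (m' + Finsupp.single a α + Finsupp.single b β) k := by
          rw [hmtr_apply]
          simp [Finsupp.add_apply, Finsupp.single_apply, hm'tr_apply, hk]
        omega
      · rw [hwsupp k (Nat.not_lt.mp hk)]; exact Nat.zero_le _
    have hmtr_mem : mtr ∈ L i := by
      have heq : w + (mtr - w) = mtr := by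
        ext k
        have := hw_le k
        simp only [Finsupp.add_apply, Finsupp.tsub_apply]
        omega
      rw [← heq]
      refine hmul w hwL _ ?_
      intro k hk
      have := hmtr_supp k hk
      simp only [Finsupp.tsub_apply]
      omega
    have hdeg : mdeg ttr = mdeg mtr := by
      rw [httr, hmtr]
      rw [mdeg_add, mdeg_add, mdeg_add, mdeg_add, mdeg_single, mdeg_single,
        mdeg_single, mdeg_single]
      omega
    have hlexgt : LexGT ttr mtr := by
      refine ⟨a, ?_, ?_⟩
      · have h1 : m'tr a = 0 := by rw [hm'tr_apply]; simp [ha, hma]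
        have h2 : b ≠ a := (ne_of_lt hab).symm
        rw [httr_apply, hmtr_apply]
        simp [h1, h2]
        omega
      · intro j hj
        have h2 : a ≠ j := (ne_of_lt hj).symm
        have h3 : b ≠ j := (ne_of_lt (hj.trans hab)).symm
        rw [httr_apply, hmtr_apply]
        simp [h2, h3]
    have httr_mem : ttr ∈ L i := hlex ttr mtr httr_supp hdeg hmtr_mem hlexgt
    refine ⟨i, ttr, httr_mem, ?_⟩
    intro k
    rw [httr_apply]
    simp only [Finsupp.add_apply, Finsupp.single_apply]
    have h1 : m'tr k ≤ m' k := by rw [hm'tr_apply]; split <;> omega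
    by_cases h2 : a = k <;> by_cases h3 : b = k <;> simp [h2, h3] <;> omega
  · -- b is not among the first I variables: w b = 0 and w still divides the target
    have hwb : w b = 0 := hwsupp b (Nat.not_lt.mp hb)
    refine ⟨i, w, hwL, ?_⟩
    intro k
    have h := hw k
    simp only [Finsupp.add_apply, Finsupp.single_apply] at h ⊢
    by_cases hka : a = k
    · subst hka
      have h2 : b ≠ a := (ne_of_lt hab).symm
      simp [h2, hma] at h ⊢
      omega
    · by_cases hkb : b = k
      · subst hkb
        simp [hwb]
      · simp [hka, hkb] at h ⊢
        exact h
end
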